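/- There exist universal constants C₁ > 0 and C₂ > 0 such that: (i) for all R > 0 and 0 < T < R², C₁ √T ≤ φ₂(T,R) ≤ C₂ √T; and (ii) for all R > 0 and T ≥ R², C₁ · R(1 + ln(T/R²)) ≤ φ₂(T,R) ≤ C₂ · R(1 + ln(T/R²)). Here φ₂(T,R) = ∫_0^T ∫_0^R t^{-1} exp(-r²/(4t)) dr dt. -/

import Mathlib

open MeasureTheory Real Set

-- measurability of the kernel
lemma phi2_meas : Measurable (fun p : ℝ × ℝ => (p.1)⁻¹ * Real.exp (-(p.2 ^ 2) / (4 * p.1))) := by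
  fun_prop

-- inner integrand integrable for t > 0
lemma phi2_inner_integrable {t : ℝ} (ht : 0 < t) (R : ℝ) :
    IntegrableOn (fun r : ℝ => t⁻¹ * Real.exp (-(r ^ 2) / (4 * t))) (Ioo 0 R) := by
  have : Continuous (fun r : ℝ => t⁻¹ * Real.exp (-(r ^ 2) / (4 * t))) := by fun_prop
  exact (this.continuousOn).integrableOn_compact isCompact_Icc |>.mono_set Ioo_subset_Icc_self

-- inner upper bound via Gaussian
lemma phi2_inner_le {t : ℝ} (ht : 0 < t) (R : ℝ) :
    (∫ r in Ioo (0:ℝ) R, t⁻¹ * Real.exp (-(r ^ 2) / (4 * t))) ≤ 2 * Real.sqrt π * (Real.sqrt t)⁻¹ := by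
  have hb : (0:ℝ) < 1 / (4 * t) := by positivity
  have heq : ∀ r : ℝ, t⁻¹ * Real.exp (-(r ^ 2) / (4 * t)) = t⁻¹ * Real.exp (-(1/(4*t)) * r ^ 2) := by
    intro r; ring_nf
  have h1 : (∫ r in Ioo (0:ℝ) R, t⁻¹ * Real.exp (-(r ^ 2) / (4 * t)))
      ≤ ∫ r : ℝ, t⁻¹ * Real.exp (-(1/(4*t)) * r ^ 2) := by
    simp_rw [heq]
    refine setIntegral_le_integral ((integrable_exp_neg_mul_sq hb).const_mul _) ?_
    filter_upwards with r; positivity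
  refine h1.trans_eq ?_
  rw [integral_const_mul, integral_gaussian]
  rw [show π / (1/(4*t)) = 4 * t * π by field_simp]
  rw [show (4:ℝ) * t * π = (2*Real.sqrt t)^2 * π by
    rw [mul_pow, sq_sqrt ht.le]; ring]
  rw [Real.sqrt_mul (by positivity), Real.sqrt_sq (by positivity)]
  rw [eq_comm, mul_comm (2 * Real.sqrt π)]
  field_simp
  linear_combination (-1) * Real.sq_sqrt ht.le

-- crude inner upper bound
lemma phi2_inner_le' {t R : ℝ} (ht : 0 < t) (hR : 0 < R) :
    (∫ r in Ioo (0:ℝ) R, t⁻¹ * Real.exp (-(r ^ 2) / (4 * t))) ≤ R * t⁻¹ := by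
  have hconst : IntegrableOn (fun _ : ℝ => t⁻¹) (Ioo 0 R) volume :=
    integrableOn_const measure_Ioo_lt_top.ne
  have h : (∫ r in Ioo (0:ℝ) R, t⁻¹ * Real.exp (-(r ^ 2) / (4 * t))) ≤ ∫ _ in Ioo (0:ℝ) R, t⁻¹ :=
    setIntegral_mono_on (phi2_inner_integrable ht R) hconst measurableSet_Ioo (fun r _ => by
      have h1 : Real.exp (-(r ^ 2) / (4 * t)) ≤ 1 := by
        exact Real.exp_le_one_iff.2 (div_nonpos_of_nonpos_of_nonneg (neg_nonpos.2 (by positivity)) (by positivity))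
      nlinarith [inv_pos.2 ht, Real.exp_pos (-(r ^ 2) / (4 * t))])
  refine h.trans (le_of_eq ?_)
  rw [setIntegral_const]
  simp [Real.volume_Ioo, ENNReal.toReal_ofReal hR.le, hR.le]

-- inner lower bound
lemma phi2_inner_ge {t R : ℝ} (ht : 0 < t) (hR : 0 < R) :
    Real.exp (-4⁻¹) * (min (Real.sqrt t) R) * t⁻¹
      ≤ ∫ r in Ioo (0:ℝ) R, t⁻¹ * Real.exp (-(r ^ 2) / (4 * t)) := by
  set m := min (Real.sqrt t) R with hm
  have hm0 : 0 < m := lt_min (Real.sqrt_pos.2 ht) hR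
  have hnonneg : 0 ≤ᵐ[volume.restrict (Ioo (0:ℝ) R)]
      (fun r : ℝ => t⁻¹ * Real.exp (-(r ^ 2) / (4 * t))) := by
    filter_upwards with r; positivity
  have hsub : Ioo (0:ℝ) m ≤ᵐ[volume] Ioo (0:ℝ) R :=
    HasSubset.Subset.eventuallyLE (Ioo_subset_Ioo le_rfl (min_le_right _ _))
  have h2 : (∫ r in Ioo (0:ℝ) m, t⁻¹ * Real.exp (-(r ^ 2) / (4 * t)))
      ≤ ∫ r in Ioo (0:ℝ) R, t⁻¹ * Real.exp (-(r ^ 2) / (4 * t)) :=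
    setIntegral_mono_set (phi2_inner_integrable ht R) hnonneg hsub
  refine le_trans ?_ h2
  have h1 : (∫ r in Ioo (0:ℝ) m, (t⁻¹ * Real.exp (-4⁻¹) : ℝ))
      ≤ ∫ r in Ioo (0:ℝ) m, t⁻¹ * Real.exp (-(r ^ 2) / (4 * t)) := by
    refine setIntegral_mono_on
      (integrableOn_const measure_Ioo_lt_top.ne)
      (phi2_inner_integrable ht m) measurableSet_Ioo (fun r hr => ?_)
    have hr2 : r ^ 2 ≤ t := by
      have h1 : r ≤ Real.sqrt t := le_of_lt (lt_of_lt_of_le hr.2 (min_le_left _ _))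
      nlinarith [Real.sq_sqrt ht.le, hr.1]
    have hexp : Real.exp (-4⁻¹ : ℝ) ≤ Real.exp (-(r ^ 2) / (4 * t)) := by
      apply Real.exp_le_exp.2
      rw [neg_div]
      apply neg_le_neg
      rw [div_le_iff₀ (by positivity)]
      nlinarith
    exact mul_le_mul_of_nonneg_left hexp (inv_pos.2 ht).le
  refine le_trans (le_of_eq ?_) h1
  rw [setIntegral_const]
  simp only [Real.volume_real_Ioo_of_le hm0.le, Real.volume_Ioo, sub_zero, ENNReal.toReal_ofReal hm0.le, smul_eq_mul]
  ring

-- measurability of the outer function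
lemma phi2_outer_meas (R : ℝ) :
    StronglyMeasurable (fun t : ℝ => ∫ r in Ioo (0:ℝ) R, t⁻¹ * Real.exp (-(r ^ 2) / (4 * t))) := by
  exact MeasureTheory.StronglyMeasurable.integral_prod_right
    (ν := volume.restrict (Ioo 0 R)) (f := fun t r => t⁻¹ * Real.exp (-(r ^ 2) / (4 * t)))
    phi2_meas.stronglyMeasurable

lemma phi2_outer_nonneg (R : ℝ) {t : ℝ} (ht : 0 ≤ t) :
    0 ≤ ∫ r in Ioo (0:ℝ) R, t⁻¹ * Real.exp (-(r ^ 2) / (4 * t)) := by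
  rcases eq_or_lt_of_le ht with h | h
  · simp [← h]
  · apply integral_nonneg; intro r; positivity

lemma rpow_integrableOn {T : ℝ} (hT : 0 < T) :
    IntegrableOn (fun t : ℝ => t ^ (-(1/2) : ℝ)) (Ioc 0 T) := by
  have := intervalIntegral.intervalIntegrable_rpow' (a := 0) (b := T) (r := -(1/2)) (by norm_num)
  rwa [intervalIntegrable_iff_integrableOn_Ioc_of_le hT.le] at this

lemma sqrt_inv_eq_rpow {t : ℝ} (ht : 0 < t) : (Real.sqrt t)⁻¹ = t ^ (-(1/2) : ℝ) := by
  rw [Real.sqrt_eq_rpow, ← Real.rpow_neg ht.le]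

-- integrability of the outer function
lemma phi2_outer_integrable {T : ℝ} (hT : 0 < T) (R : ℝ) :
    IntegrableOn (fun t : ℝ => ∫ r in Ioo (0:ℝ) R, t⁻¹ * Real.exp (-(r ^ 2) / (4 * t)))
      (Ioc 0 T) := by
  refine Integrable.mono ((rpow_integrableOn hT).const_mul (2 * Real.sqrt π))
    (phi2_outer_meas R).aestronglyMeasurable ?_
  rw [ae_restrict_iff' measurableSet_Ioc]
  filter_upwards with t ht
  rw [Real.norm_of_nonneg (phi2_outer_nonneg R ht.1.le), Real.norm_of_nonneg (by have := ht.1; positivity)]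
  rw [← sqrt_inv_eq_rpow ht.1]
  exact phi2_inner_le ht.1 R

lemma integral_rpow_Ioo {S : ℝ} (hS : 0 < S) :
    (∫ t in Ioo (0:ℝ) S, t ^ (-(1/2) : ℝ)) = 2 * Real.sqrt S := by
  rw [← MeasureTheory.integral_Ioc_eq_integral_Ioo,
    ← intervalIntegral.integral_of_le hS.le,
    integral_rpow (Or.inl (by norm_num : (-1:ℝ) < -(1/2)))]
  rw [Real.zero_rpow (by norm_num), Real.sqrt_eq_rpow]
  norm_num
  ring

-- bounds on the piece over (0, S] when S ≤ R²
lemma phi2_piece1 {R S : ℝ} (hR : 0 < R) (hS : 0 < S) (hSR : S ≤ R ^ 2) :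
    2 * Real.exp (-4⁻¹) * Real.sqrt S ≤
      (∫ t in Ioo (0:ℝ) S, ∫ r in Ioo (0:ℝ) R, t⁻¹ * Real.exp (-(r ^ 2) / (4 * t))) ∧
    (∫ t in Ioo (0:ℝ) S, ∫ r in Ioo (0:ℝ) R, t⁻¹ * Real.exp (-(r ^ 2) / (4 * t)))
      ≤ 2 * Real.sqrt π * (2 * Real.sqrt S) := by
  have hJint : IntegrableOn
      (fun t : ℝ => ∫ r in Ioo (0:ℝ) R, t⁻¹ * Real.exp (-(r ^ 2) / (4 * t))) (Ioo 0 S) :=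
    (phi2_outer_integrable hS R).mono_set Ioo_subset_Ioc_self
  have hrint : IntegrableOn (fun t : ℝ => t ^ (-(1/2) : ℝ)) (Ioo 0 S) :=
    (rpow_integrableOn hS).mono_set Ioo_subset_Ioc_self
  have hmin : ∀ t ∈ Ioo (0:ℝ) S, min (Real.sqrt t) R = Real.sqrt t := by
    intro t ht
    refine min_eq_left ?_
    calc Real.sqrt t ≤ Real.sqrt (R ^ 2) := Real.sqrt_le_sqrt (le_trans ht.2.le hSR)
    _ = R := Real.sqrt_sq hR.le
  constructor
  · have hlow : ∀ t ∈ Ioo (0:ℝ) S,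
        Real.exp (-4⁻¹) * t ^ (-(1/2) : ℝ) ≤
          ∫ r in Ioo (0:ℝ) R, t⁻¹ * Real.exp (-(r ^ 2) / (4 * t)) := by
      intro t ht
      have h := phi2_inner_ge ht.1 hR
      rw [hmin t ht] at h
      refine le_trans (le_of_eq ?_) h
      rw [← sqrt_inv_eq_rpow ht.1]
      rw [mul_assoc]
      congr 1
      have h2 : t⁻¹ = (Real.sqrt t)⁻¹ * (Real.sqrt t)⁻¹ := by
        rw [← mul_inv, Real.mul_self_sqrt ht.1.le]
      rw [h2, ← mul_assoc, mul_inv_cancel₀ (ne_of_gt (Real.sqrt_pos.2 ht.1)), one_mul]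
    have := setIntegral_mono_on (hrint.const_mul (Real.exp (-4⁻¹))) hJint
      measurableSet_Ioo hlow
    refine le_trans (le_of_eq ?_) this
    rw [MeasureTheory.integral_const_mul, integral_rpow_Ioo hS]
    ring
  · have hup : ∀ t ∈ Ioo (0:ℝ) S,
        (∫ r in Ioo (0:ℝ) R, t⁻¹ * Real.exp (-(r ^ 2) / (4 * t)))
          ≤ 2 * Real.sqrt π * t ^ (-(1/2) : ℝ) := by
      intro t ht
      rw [← sqrt_inv_eq_rpow ht.1]
      exact phi2_inner_le ht.1 R
    have := setIntegral_mono_on hJint (hrint.const_mul (2 * Real.sqrt π))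
      measurableSet_Ioo hup
    refine le_trans this (le_of_eq ?_)
    rw [MeasureTheory.integral_const_mul, integral_rpow_Ioo hS]

-- bounds on the piece over (R², T)
lemma phi2_piece2 {R T : ℝ} (hR : 0 < R) (hT : R ^ 2 ≤ T) :
    Real.exp (-4⁻¹) * (R * Real.log (T / R ^ 2)) ≤
      (∫ t in Ioo (R^2) T, ∫ r in Ioo (0:ℝ) R, t⁻¹ * Real.exp (-(r ^ 2) / (4 * t))) ∧
    (∫ t in Ioo (R^2) T, ∫ r in Ioo (0:ℝ) R, t⁻¹ * Real.exp (-(r ^ 2) / (4 * t)))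
      ≤ R * Real.log (T / R ^ 2) := by
  have hR2 : (0:ℝ) < R ^ 2 := by positivity
  have hT0 : 0 < T := lt_of_lt_of_le hR2 hT
  have hJint : IntegrableOn
      (fun t : ℝ => ∫ r in Ioo (0:ℝ) R, t⁻¹ * Real.exp (-(r ^ 2) / (4 * t))) (Ioo (R^2) T) :=
    (phi2_outer_integrable hT0 R).mono_set (fun t ht => ⟨lt_trans hR2 ht.1, ht.2.le⟩)
  have hinv : IntegrableOn (fun t : ℝ => t⁻¹) (Ioo (R^2) T) := by
    have h0 : (0:ℝ) ∉ Set.uIcc (R^2) T := by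
      rw [Set.uIcc_of_le hT]
      intro h
      exact absurd h.1 (not_le.2 hR2)
    have := intervalIntegral.intervalIntegrable_inv (f := fun x : ℝ => x) (μ := volume)
      (fun x hx => fun hx0 => h0 (hx0 ▸ hx)) continuousOn_id
    rw [intervalIntegrable_iff_integrableOn_Ioc_of_le hT] at this
    exact this.mono_set Ioo_subset_Ioc_self
  have hinvint : (∫ t in Ioo (R^2) T, t⁻¹) = Real.log (T / R ^ 2) := by
    rw [← MeasureTheory.integral_Ioc_eq_integral_Ioo, ← intervalIntegral.integral_of_le hT,
      integral_inv_of_pos hR2 hT0]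
  have hmin : ∀ t ∈ Ioo (R^2) T, min (Real.sqrt t) R = R := by
    intro t ht
    refine min_eq_right ?_
    calc R = Real.sqrt (R ^ 2) := (Real.sqrt_sq hR.le).symm
    _ ≤ Real.sqrt t := Real.sqrt_le_sqrt ht.1.le
  constructor
  · have hlow : ∀ t ∈ Ioo (R^2) T,
        Real.exp (-4⁻¹) * R * t⁻¹ ≤
          ∫ r in Ioo (0:ℝ) R, t⁻¹ * Real.exp (-(r ^ 2) / (4 * t)) := by
      intro t ht
      have h := phi2_inner_ge (lt_trans hR2 ht.1) hR
      rwa [hmin t ht] at h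
    have := setIntegral_mono_on (hinv.const_mul (Real.exp (-4⁻¹) * R)) hJint
      measurableSet_Ioo hlow
    refine le_trans (le_of_eq ?_) this
    rw [MeasureTheory.integral_const_mul, hinvint]
    ring
  · have hup : ∀ t ∈ Ioo (R^2) T,
        (∫ r in Ioo (0:ℝ) R, t⁻¹ * Real.exp (-(r ^ 2) / (4 * t))) ≤ R * t⁻¹ := by
      intro t ht
      exact phi2_inner_le' (lt_trans hR2 ht.1) hR
    have := setIntegral_mono_on hJint (hinv.const_mul R) measurableSet_Ioo hup
    refine le_trans this (le_of_eq ?_)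
    rw [MeasureTheory.integral_const_mul, hinvint]

lemma phi2_split {R T : ℝ} (hR : 0 < R) (hT : R ^ 2 ≤ T) :
    (∫ t in Ioo (0:ℝ) T, ∫ r in Ioo (0:ℝ) R, t⁻¹ * Real.exp (-(r ^ 2) / (4 * t)))
      = (∫ t in Ioo (0:ℝ) (R^2), ∫ r in Ioo (0:ℝ) R, t⁻¹ * Real.exp (-(r ^ 2) / (4 * t)))
        + ∫ t in Ioo (R^2) T, ∫ r in Ioo (0:ℝ) R, t⁻¹ * Real.exp (-(r ^ 2) / (4 * t)) := by
  have hR2 : (0:ℝ) < R ^ 2 := by positivity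
  have hT0 : 0 < T := lt_of_lt_of_le hR2 hT
  rw [← MeasureTheory.integral_Ioc_eq_integral_Ioo, ← MeasureTheory.integral_Ioc_eq_integral_Ioo,
    ← MeasureTheory.integral_Ioc_eq_integral_Ioo,
    ← Ioc_union_Ioc_eq_Ioc hR2.le hT]
  exact setIntegral_union (Ioc_disjoint_Ioc_of_le le_rfl) measurableSet_Ioc
    ((phi2_outer_integrable hT0 R).mono_set (Ioc_subset_Ioc_right hT))
    ((phi2_outer_integrable hT0 R).mono_set (Ioc_subset_Ioc_left hR2.le))

theorem stmt_5 :
    ∃ C₁ > (0:ℝ), ∃ C₂ > (0:ℝ),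
      (∀ T R : ℝ, 0 < R → 0 < T → T < R ^ 2 →
        C₁ * Real.sqrt T ≤
          (∫ t in Set.Ioo (0:ℝ) T, ∫ r in Set.Ioo (0:ℝ) R,
            t⁻¹ * Real.exp (-(r ^ 2) / (4 * t))) ∧
        (∫ t in Set.Ioo (0:ℝ) T, ∫ r in Set.Ioo (0:ℝ) R,
            t⁻¹ * Real.exp (-(r ^ 2) / (4 * t))) ≤ C₂ * Real.sqrt T) ∧
      (∀ T R : ℝ, 0 < R → R ^ 2 ≤ T →
        C₁ * (R * (1 + Real.log (T / R ^ 2))) ≤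
          (∫ t in Set.Ioo (0:ℝ) T, ∫ r in Set.Ioo (0:ℝ) R,
            t⁻¹ * Real.exp (-(r ^ 2) / (4 * t))) ∧
        (∫ t in Set.Ioo (0:ℝ) T, ∫ r in Set.Ioo (0:ℝ) R,
            t⁻¹ * Real.exp (-(r ^ 2) / (4 * t))) ≤ C₂ * (R * (1 + Real.log (T / R ^ 2)))) := by
  have hπ : (1:ℝ) ≤ Real.sqrt π := by
    have h1 : Real.sqrt 1 ≤ Real.sqrt π := Real.sqrt_le_sqrt (by linarith [Real.pi_gt_three])
    rwa [Real.sqrt_one] at h1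
  refine ⟨Real.exp (-4⁻¹), Real.exp_pos _, 4 * Real.sqrt π, by linarith, ?_, ?_⟩
  · intro T R hR hT0 hTR
    obtain ⟨h1, h2⟩ := phi2_piece1 hR hT0 hTR.le
    constructor
    · refine le_trans ?_ h1
      nlinarith [Real.sqrt_nonneg T, Real.exp_pos (-4⁻¹:ℝ)]
    · refine le_trans h2 (le_of_eq (by ring))
  · intro T R hR hT
    have hR2 : (0:ℝ) < R ^ 2 := by positivity
    have hsq : Real.sqrt (R ^ 2) = R := Real.sqrt_sq hR.le
    obtain ⟨h1, h2⟩ := phi2_piece1 hR hR2 le_rfl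
    rw [hsq] at h1 h2
    obtain ⟨h3, h4⟩ := phi2_piece2 hR hT
    have hL : 0 ≤ Real.log (T / R ^ 2) :=
      Real.log_nonneg ((one_le_div hR2).2 hT)
    rw [phi2_split hR hT]
    constructor
    · nlinarith [mul_pos (Real.exp_pos (-4⁻¹:ℝ)) hR,
        mul_nonneg (mul_pos (Real.exp_pos (-4⁻¹:ℝ)) hR).le hL]
    · nlinarith [mul_nonneg hR.le hL]
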